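/- Let [A] be an interval matrix determined by A̲ ≤ Ā. Then [A] is strongly column sufficient if and only if for every pair of disjoint index sets I, J ⊆ {1,…,n} with I ∪ J ≠ ∅, the system [[A̲_{I,I}, −Ā_{I,J}],[−Ā_{J,I}, A̲_{J,J}]] x ≨ 0 (i.e. ≤ 0 entrywise and not all zero), x > 0, is infeasible. -/

import Mathlib

open Matrix

/-- Spectral radius of a real square matrix (via its complex spectrum). -/
noncomputable def specRad {n : ℕ} (A : Matrix (Fin n) (Fin n) ℝ) : ℝ :=
  (spectralRadius ℂ (A.map (algebraMap ℝ ℂ))).toReal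

/-- `A` is an M-matrix: `A = s•I - N` with `N ≥ 0` and `s > ρ(N)`. -/
def IsMMatrix {n : ℕ} (A : Matrix (Fin n) (Fin n) ℝ) : Prop :=
  ∃ (s : ℝ) (N : Matrix (Fin n) (Fin n) ℝ),
    (∀ i j, 0 ≤ N i j) ∧ A = s • (1 : Matrix (Fin n) (Fin n) ℝ) - N ∧ specRad N < s

/-- `A` is an M0-matrix: `A = s•I - N` with `N ≥ 0` and `s ≥ ρ(N)`. -/
def IsM0Matrix {n : ℕ} (A : Matrix (Fin n) (Fin n) ℝ) : Prop :=
  ∃ (s : ℝ) (N : Matrix (Fin n) (Fin n) ℝ),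
    (∀ i j, 0 ≤ N i j) ∧ A = s • (1 : Matrix (Fin n) (Fin n) ℝ) - N ∧ specRad N ≤ s

/-- Comparison matrix. -/
def compMatrix {n : ℕ} (A : Matrix (Fin n) (Fin n) ℝ) : Matrix (Fin n) (Fin n) ℝ :=
  fun i j => if i = j then |A i i| else -|A i j|

def IsHMatrix {n : ℕ} (A : Matrix (Fin n) (Fin n) ℝ) : Prop :=
  IsMMatrix (compMatrix A)

def IsSMatrix {n : ℕ} (A : Matrix (Fin n) (Fin n) ℝ) : Prop :=
  ∃ x : Fin n → ℝ, (∀ i, 0 < x i) ∧ (∀ i, 0 < A.mulVec x i)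

def Copositive {n : ℕ} (A : Matrix (Fin n) (Fin n) ℝ) : Prop :=
  ∀ x : Fin n → ℝ, (∀ i, 0 ≤ x i) → 0 ≤ x ⬝ᵥ A.mulVec x

def StrictlyCopositive {n : ℕ} (A : Matrix (Fin n) (Fin n) ℝ) : Prop :=
  ∀ x : Fin n → ℝ, (∀ i, 0 ≤ x i) → x ≠ 0 → 0 < x ⬝ᵥ A.mulVec x

def Semimonotone {n : ℕ} (A : Matrix (Fin n) (Fin n) ℝ) : Prop :=
  ∀ I : Finset (Fin n), I.Nonempty →
    ¬ ∃ x : ↥I → ℝ,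
      (∀ i, (A.submatrix ((↑) : ↥I → Fin n) ((↑) : ↥I → Fin n)).mulVec x i < 0) ∧
      (∀ i, 0 ≤ x i)

def PrincipallyNondegenerate {n : ℕ} (A : Matrix (Fin n) (Fin n) ℝ) : Prop :=
  ∀ I : Finset (Fin n), I.Nonempty →
    (A.submatrix ((↑) : ↥I → Fin n) ((↑) : ↥I → Fin n)).det ≠ 0

/-- A nonnegative matrix is irreducible if `(I + A)^(n-1) > 0` entrywise. -/
def IrreducibleMat {n : ℕ} (A : Matrix (Fin n) (Fin n) ℝ) : Prop :=
  ∀ i j, 0 < ((1 + A) ^ (n - 1)) i j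

/-- The block matrix `[[A_II, -A_IJ], [-A_JI, A_JJ]]`. -/
def csBlock {n : ℕ} (A : Matrix (Fin n) (Fin n) ℝ) (I J : Finset (Fin n)) :
    Matrix (↥I ⊕ ↥J) (↥I ⊕ ↥J) ℝ :=
  Matrix.fromBlocks
    (A.submatrix ((↑) : ↥I → Fin n) ((↑) : ↥I → Fin n))
    (-(A.submatrix ((↑) : ↥I → Fin n) ((↑) : ↥J → Fin n)))
    (-(A.submatrix ((↑) : ↥J → Fin n) ((↑) : ↥I → Fin n)))
    (A.submatrix ((↑) : ↥J → Fin n) ((↑) : ↥J → Fin n))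

def ColumnSufficient {n : ℕ} (A : Matrix (Fin n) (Fin n) ℝ) : Prop :=
  ∀ I J : Finset (Fin n), Disjoint I J → (I ∪ J).Nonempty →
    ¬ ∃ x : (↥I ⊕ ↥J) → ℝ,
      (∀ k, (csBlock A I J).mulVec x k ≤ 0) ∧
      (csBlock A I J).mulVec x ≠ 0 ∧
      (∀ k, 0 < x k)

def IsR0Matrix {n : ℕ} (A : Matrix (Fin n) (Fin n) ℝ) : Prop :=
  ∀ I : Finset (Fin n), I.Nonempty →
    ¬ ∃ x : ↥I → ℝ,
      (∀ i, (A.submatrix ((↑) : ↥I → Fin n) ((↑) : ↥I → Fin n)).mulVec x i = 0) ∧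
      (∀ j : ↥(Iᶜ : Finset (Fin n)),
        0 ≤ (A.submatrix ((↑) : ↥(Iᶜ : Finset (Fin n)) → Fin n) ((↑) : ↥I → Fin n)).mulVec x j) ∧
      (∀ i, 0 < x i)

def IsRMatrix {n : ℕ} (A : Matrix (Fin n) (Fin n) ℝ) : Prop :=
  ∀ I : Finset (Fin n), I.Nonempty →
    ¬ ∃ (x : ↥I → ℝ) (t : ℝ),
      (∀ i, (A.submatrix ((↑) : ↥I → Fin n) ((↑) : ↥I → Fin n)).mulVec x i + t = 0) ∧
      (∀ j : ↥(Iᶜ : Finset (Fin n)),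
        0 ≤ (A.submatrix ((↑) : ↥(Iᶜ : Finset (Fin n)) → Fin n) ((↑) : ↥I → Fin n)).mulVec x j + t) ∧
      (∀ i, 0 < x i) ∧ 0 ≤ t

def PosDefMat {n : ℕ} (A : Matrix (Fin n) (Fin n) ℝ) : Prop :=
  ∀ x : Fin n → ℝ, x ≠ 0 → 0 < x ⬝ᵥ A.mulVec x

def PosSemidefMat {n : ℕ} (A : Matrix (Fin n) (Fin n) ℝ) : Prop :=
  ∀ x : Fin n → ℝ, 0 ≤ x ⬝ᵥ A.mulVec x

/-- Membership of `A` in the interval matrix `[Al, Au]`. -/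
def memInterval {n : ℕ} (Al Au A : Matrix (Fin n) (Fin n) ℝ) : Prop :=
  ∀ i j, Al i j ≤ A i j ∧ A i j ≤ Au i j

/-- The mixed block matrix `[[Al_II, -Au_IJ], [-Au_JI, Al_JJ]]`. -/
def csMixedBlock {n : ℕ} (Al Au : Matrix (Fin n) (Fin n) ℝ) (I J : Finset (Fin n)) :
    Matrix (↥I ⊕ ↥J) (↥I ⊕ ↥J) ℝ :=
  Matrix.fromBlocks
    (Al.submatrix ((↑) : ↥I → Fin n) ((↑) : ↥I → Fin n))
    (-(Au.submatrix ((↑) : ↥I → Fin n) ((↑) : ↥J → Fin n)))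
    (-(Au.submatrix ((↑) : ↥J → Fin n) ((↑) : ↥I → Fin n)))
    (Al.submatrix ((↑) : ↥J → Fin n) ((↑) : ↥J → Fin n))

lemma mixed_le_block {n : ℕ} (Al Au A : Matrix (Fin n) (Fin n) ℝ)
    (hA : memInterval Al Au A) (I J : Finset (Fin n)) (x : (↥I ⊕ ↥J) → ℝ)
    (hx : ∀ k, 0 ≤ x k) (k : ↥I ⊕ ↥J) :
    (csMixedBlock Al Au I J).mulVec x k ≤ (csBlock A I J).mulVec x k := by
  cases k with
  | inl i =>
    simp only [csMixedBlock, csBlock, Matrix.mulVec, dotProduct,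
      Fintype.sum_sum_type, Matrix.fromBlocks_apply₁₁, Matrix.fromBlocks_apply₁₂,
      Matrix.submatrix_apply, Matrix.neg_apply]
    apply add_le_add
    · exact Finset.sum_le_sum fun j _ =>
        mul_le_mul_of_nonneg_right (hA _ _).1 (hx _)
    · exact Finset.sum_le_sum fun j _ =>
        mul_le_mul_of_nonneg_right (neg_le_neg (hA _ _).2) (hx _)
  | inr i =>
    simp only [csMixedBlock, csBlock, Matrix.mulVec, dotProduct,
      Fintype.sum_sum_type, Matrix.fromBlocks_apply₂₁, Matrix.fromBlocks_apply₂₂,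
      Matrix.submatrix_apply, Matrix.neg_apply]
    apply add_le_add
    · exact Finset.sum_le_sum fun j _ =>
        mul_le_mul_of_nonneg_right (neg_le_neg (hA _ _).2) (hx _)
    · exact Finset.sum_le_sum fun j _ =>
        mul_le_mul_of_nonneg_right (hA _ _).1 (hx _)

theorem stmt_11 {n : ℕ} (Al Au : Matrix (Fin n) (Fin n) ℝ)
    (hle : ∀ i j, Al i j ≤ Au i j) :
    (∀ A : Matrix (Fin n) (Fin n) ℝ, memInterval Al Au A → ColumnSufficient A) ↔
      (∀ I J : Finset (Fin n), Disjoint I J → (I ∪ J).Nonempty →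
        ¬ ∃ x : (↥I ⊕ ↥J) → ℝ,
          (∀ k, (csMixedBlock Al Au I J).mulVec x k ≤ 0) ∧
          (csMixedBlock Al Au I J).mulVec x ≠ 0 ∧
          (∀ k, 0 < x k)) := by
  constructor
  · intro h I J hd hne ⟨x, h1, h2, h3⟩
    set A : Matrix (Fin n) (Fin n) ℝ :=
      fun i j => if (i ∈ I ∧ j ∈ J) ∨ (i ∈ J ∧ j ∈ I) then Au i j else Al i j with hAdef
    have hmem : memInterval Al Au A := by
      intro i j
      simp only [hAdef]
      split <;> exact ⟨by first | exact le_refl _ | exact hle i j,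
        by first | exact le_refl _ | exact hle i j⟩
    have hblk : csBlock A I J = csMixedBlock Al Au I J := by
      ext k l
      cases k with
      | inl i =>
        cases l with
        | inl j =>
          simp only [csBlock, csMixedBlock, Matrix.fromBlocks_apply₁₁,
            Matrix.submatrix_apply]
          simp only [hAdef]
          rw [if_neg]
          rintro (⟨_, hj⟩ | ⟨hi, _⟩)
          · exact (Finset.disjoint_left.mp hd j.2) hj
          · exact (Finset.disjoint_left.mp hd i.2) hi
        | inr j =>
          simp only [csBlock, csMixedBlock, Matrix.fromBlocks_apply₁₂,
            Matrix.neg_apply, Matrix.submatrix_apply]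
          simp only [hAdef]
          rw [if_pos (Or.inl ⟨i.2, j.2⟩)]
      | inr i =>
        cases l with
        | inl j =>
          simp only [csBlock, csMixedBlock, Matrix.fromBlocks_apply₂₁,
            Matrix.neg_apply, Matrix.submatrix_apply]
          simp only [hAdef]
          rw [if_pos (Or.inr ⟨i.2, j.2⟩)]
        | inr j =>
          simp only [csBlock, csMixedBlock, Matrix.fromBlocks_apply₂₂,
            Matrix.submatrix_apply]
          simp only [hAdef]
          rw [if_neg]
          rintro (⟨hi, _⟩ | ⟨_, hj⟩)
          · exact (Finset.disjoint_left.mp hd hi) i.2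
          · exact (Finset.disjoint_left.mp hd hj) j.2
    exact h A hmem I J hd hne ⟨x, by rw [hblk]; exact h1, by rw [hblk]; exact h2, h3⟩
  · intro h A hmem I J hd hne ⟨x, h1, h2, h3⟩
    have hle' : ∀ k, (csMixedBlock Al Au I J).mulVec x k ≤ (csBlock A I J).mulVec x k :=
      mixed_le_block Al Au A hmem I J x (fun k => (h3 k).le)
    apply h I J hd hne
    refine ⟨x, fun k => (hle' k).trans (h1 k), ?_, h3⟩
    obtain ⟨k, hk⟩ := Function.ne_iff.mp h2
    intro hzero
    have : (csMixedBlock Al Au I J).mulVec x k < 0 :=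
      lt_of_le_of_lt (hle' k) (lt_of_le_of_ne (h1 k) hk)
    rw [hzero] at this
    exact lt_irrefl _ this
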